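/- Consider three non-collinear points B, D, T in the plane and a point U strictly outside the closed triangle BDT. Then there exists a point U' on the boundary of the triangle such that ‖U' − B‖ ≤ ‖U − B‖, ‖U' − D‖ ≤ ‖U − D‖, and ‖U' − T‖ ≤ ‖U − T‖, with at least one inequality strict. -/

import Mathlib

open scoped RealInnerProductSpace

theorem stmt_15 (B D T U : EuclideanSpace ℝ (Fin 2))
    (hncol : AffineIndependent ℝ ![B, D, T])
    (hU : U ∉ convexHull ℝ ({B, D, T} : Set (EuclideanSpace ℝ (Fin 2)))) :
    ∃ U' ∈ frontier (convexHull ℝ ({B, D, T} : Set (EuclideanSpace ℝ (Fin 2)))),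
      dist U' B ≤ dist U B ∧ dist U' D ≤ dist U D ∧ dist U' T ≤ dist U T ∧
      (dist U' B < dist U B ∨ dist U' D < dist U D ∨ dist U' T < dist U T) := by
  set K := convexHull ℝ ({B, D, T} : Set (EuclideanSpace ℝ (Fin 2))) with hKdef
  have hconv : Convex ℝ K := convex_convexHull ℝ _
  have hcomp : IsCompact K := (Set.toFinite _).isCompact_convexHull ℝ
  have hBK : B ∈ K := subset_convexHull ℝ _ (by simp)
  have hDK : D ∈ K := subset_convexHull ℝ _ (by simp)
  have hTK : T ∈ K := subset_convexHull ℝ _ (by simp)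
  obtain ⟨U', hU'K, hmin⟩ :=
    exists_norm_eq_iInf_of_complete_convex ⟨B, hBK⟩ hcomp.isComplete hconv U
  have hchar : ∀ w ∈ K, ⟪U - U', w - U'⟫ ≤ 0 :=
    (norm_eq_iInf_iff_real_inner_le_zero hconv hU'K).mp hmin
  have hne : U ≠ U' := fun h => hU (h ▸ hU'K)
  have hd : 0 < ‖U - U'‖ := by
    rw [norm_pos_iff]; exact sub_ne_zero_of_ne hne
  -- key distance lemma
  have key : ∀ P ∈ K, dist U' P < dist U P := by
    intro P hP
    have h1 : ⟪U - U', P - U'⟫ ≤ 0 := hchar P hP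
    have h2 : ‖U - P‖ ^ 2 = ‖U - U'‖ ^ 2 + 2 * ⟪U - U', U' - P⟫ + ‖U' - P‖ ^ 2 := by
      have : U - P = (U - U') + (U' - P) := by abel
      rw [this, norm_add_sq_real]
    have h3 : ⟪U - U', U' - P⟫ = -⟪U - U', P - U'⟫ := by
      rw [← inner_neg_right]; congr 1; abel
    have h4 : ‖U' - P‖ ^ 2 < ‖U - P‖ ^ 2 := by nlinarith
    have h5 : ‖U' - P‖ < ‖U - P‖ :=
      lt_of_pow_lt_pow_left₀ 2 (norm_nonneg _) h4
    simpa [dist_eq_norm] using h5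
  -- frontier membership
  have hfr : U' ∈ frontier K := by
    rw [frontier, Set.mem_diff]
    refine ⟨subset_closure hU'K, ?_⟩
    intro hint
    obtain ⟨ε, hε, hball⟩ := Metric.isOpen_iff.mp isOpen_interior U' hint
    set w : EuclideanSpace ℝ (Fin 2) := U' + (ε / (2 * ‖U - U'‖)) • (U - U') with hw
    have hc : 0 < ε / (2 * ‖U - U'‖) := div_pos hε (by positivity)
    have hwK : w ∈ K := by
      apply interior_subset
      apply hball
      have : dist w U' = ε / 2 := by
        rw [hw, dist_eq_norm]
        simp only [add_sub_cancel_left, norm_smul, Real.norm_eq_abs,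
          abs_of_pos hc]
        field_simp
      rw [Metric.mem_ball, this]; linarith
    have := hchar w hwK
    rw [hw, add_sub_cancel_left, real_inner_smul_right,
      real_inner_self_eq_norm_sq] at this
    have h2 : 0 < ε / (2 * ‖U - U'‖) * ‖U - U'‖ ^ 2 := by positivity
    linarith
  exact ⟨U', hfr, (key B hBK).le, (key D hDK).le, (key T hTK).le,
    Or.inl (key B hBK)⟩
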